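/- Let μ, s⁰, sʲ ∈ ℝ², Σ a 2×2 positive definite symmetric real matrix with Λ = Σ⁻¹, and let N(m, tΣ)(x) denote the bivariate Gaussian density (1/(2πt√det Σ))·exp(-(x-m)ᵀΛ(x-m)/(2t)). Suppose sⁱ and sʲ satisfy sⁱᵀΛsⁱ = sʲᵀΛsʲ and e₁ᵀΛsⁱ = e₁ᵀΛsʲ. Then for all t > 0 and all x with x₂ = 0, the identity aᵢ·N(sⁱ + μt, tΣ)(x) = -aⱼ·N(sʲ + μt, tΣ)(x) holds when aⱼ = -aᵢ·exp(μᵀΛ(sʲ - sⁱ)). -/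

import Mathlib

open Matrix Real

theorem image_cancellation_on_boundary
    (Sig : Matrix (Fin 2) (Fin 2) ℝ) (hSym : Sig.IsSymm) (hPD : Sig.PosDef)
    (Λ : Matrix (Fin 2) (Fin 2) ℝ) (hΛ : Λ = Sig⁻¹)
    (μ si sj : Fin 2 → ℝ)
    (hquad : si ⬝ᵥ (Λ *ᵥ si) = sj ⬝ᵥ (Λ *ᵥ sj))
    (hlin : (![1, 0] : Fin 2 → ℝ) ⬝ᵥ (Λ *ᵥ si) = (![1, 0] : Fin 2 → ℝ) ⬝ᵥ (Λ *ᵥ sj))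
    (N : (Fin 2 → ℝ) → ℝ → (Fin 2 → ℝ) → ℝ)
    (hN : ∀ m t x, N m t x =
      (1 / (2 * Real.pi * t * Real.sqrt Sig.det)) *
        Real.exp (-((x - m) ⬝ᵥ (Λ *ᵥ (x - m))) / (2 * t)))
    (ai aj : ℝ) (haj : aj = -ai * Real.exp (μ ⬝ᵥ (Λ *ᵥ (sj - si)))) :
    ∀ t : ℝ, 0 < t → ∀ x : Fin 2 → ℝ, x 1 = 0 →
      ai * N (si + t • μ) t x = -aj * N (sj + t • μ) t x := by
  intro t ht x hx
  have hΛsym : Λ.IsSymm := by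
    rw [hΛ, Matrix.IsSymm, Matrix.transpose_nonsing_inv, hSym.eq]
  have hsymm : Λ 1 0 = Λ 0 1 := by
    have := congrFun (congrFun hΛsym.eq 0) 1
    simpa [Matrix.transpose_apply] using this
  have hQ : ((x - (sj + t • μ)) ⬝ᵥ (Λ *ᵥ (x - (sj + t • μ))))
      - ((x - (si + t • μ)) ⬝ᵥ (Λ *ᵥ (x - (si + t • μ))))
      = 2 * t * (μ ⬝ᵥ (Λ *ᵥ (sj - si))) := by
    simp only [dotProduct, Matrix.mulVec, Fin.sum_univ_two, Pi.sub_apply, Pi.add_apply,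
      Pi.smul_apply, smul_eq_mul, Matrix.cons_val_zero, Matrix.cons_val_one, Matrix.head_cons,
      hx] at hquad hlin ⊢
    simp only [hsymm] at hquad hlin ⊢
    linear_combination -hquad + 2 * x 0 * hlin
  set Qi : ℝ := (x - (si + t • μ)) ⬝ᵥ (Λ *ᵥ (x - (si + t • μ))) with hQi
  set Qj : ℝ := (x - (sj + t • μ)) ⬝ᵥ (Λ *ᵥ (x - (sj + t • μ))) with hQj
  set E : ℝ := μ ⬝ᵥ (Λ *ᵥ (sj - si)) with hE
  have key : -Qi / (2 * t) = E + -Qj / (2 * t) := by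
    have h2t : (2 * t) ≠ 0 := by positivity
    field_simp
    linear_combination hQ
  rw [hN, hN, haj, key, Real.exp_add]
  ring
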